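/- arXiv:math/0407423 — 3 statements merged into one kernel-verified Lean document; each statement's English description precedes it below -/
import Mathlib

section
/- Let G be a finite (additively written) abelian group of order v and let D be a k-element subset of G such that −D = D and 0 ∉ D, and let λ, μ be integers with (λ−μ)² + 4(k−μ) ≥ 0. Then D is a (v,k,λ,μ)-partial difference set in G if and only if for every nontrivial additive character χ : G → ℂˣ the sum Σ_{d∈D} χ(d) equals ((λ−μ) + √((λ−μ)²+4(k−μ)))/2 or ((λ−μ) − √((λ−μ)²+4(k−μ)))/2 (while the trivial character gives Σ_{d∈D} χ(d) = k). -/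
/-- `D` is a `(v,k,λ,μ)`-partial difference set in the (additively written) group `G`:
`G` has order `v`, `D` has `k` elements, every nonzero element of `D` arises exactly `lam`
times as a difference `d₁ - d₂` of distinct elements of `D`, and every nonzero element
outside `D` arises exactly `mu` times. -/
def IsPDS {G : Type*} [AddCommGroup G] (D : Set G) (v k : ℕ) (lam mu : ℤ) : Prop :=
  Nat.card G = v ∧ Nat.card D = k ∧
  (∀ g ∈ D, g ≠ 0 →
    (Nat.card {p : G × G // p.1 ∈ D ∧ p.2 ∈ D ∧ p.1 ≠ p.2 ∧ p.1 - p.2 = g} : ℤ) = lam) ∧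
  (∀ g : G, g ∉ D → g ≠ 0 →
    (Nat.card {p : G × G // p.1 ∈ D ∧ p.2 ∈ D ∧ p.1 ≠ p.2 ∧ p.1 - p.2 = g} : ℤ) = mu)

open Finset in
theorem stmt0 {G : Type*} [AddCommGroup G] [Finite G] (v k : ℕ) (lam mu : ℤ)
    (D : Set G) (hv : Nat.card G = v) (hk : Nat.card D = k)
    (hsym : -D = D) (h0 : (0 : G) ∉ D)
    (hdisc : (0 : ℤ) ≤ (lam - mu) ^ 2 + 4 * ((k : ℤ) - mu)) :
    IsPDS D v k lam mu ↔
      ∀ χ : AddChar G ℂ,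
        (χ = 1 → ∑ᶠ d ∈ D, χ d = (k : ℂ)) ∧
        (χ ≠ 1 →
          ∑ᶠ d ∈ D, χ d =
            ((((lam : ℝ) - mu) + Real.sqrt (((lam - mu) ^ 2 + 4 * ((k : ℤ) - mu) : ℤ) : ℝ)) / 2 : ℝ) ∨
          ∑ᶠ d ∈ D, χ d =
            ((((lam : ℝ) - mu) - Real.sqrt (((lam - mu) ^ 2 + 4 * ((k : ℤ) - mu) : ℤ) : ℝ)) / 2 : ℝ)) := by
  classical
  cases nonempty_fintype G
  set Δr : ℝ := (((lam - mu) ^ 2 + 4 * ((k : ℤ) - mu) : ℤ) : ℝ) with hΔrdef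
  have hΔ0 : (0:ℝ) ≤ Δr := by rw [hΔrdef]; exact_mod_cast hdisc
  set r1 : ℝ := (((lam : ℝ) - mu) + Real.sqrt Δr) / 2 with hr1def
  set r2 : ℝ := (((lam : ℝ) - mu) - Real.sqrt Δr) / 2 with hr2def
  -- the quadratic whose roots are r1, r2
  have hquad : ∀ z : ℂ, (z - (r1:ℂ)) * (z - (r2:ℂ))
      = z^2 - ((lam:ℂ) - (mu:ℂ)) * z - ((k:ℂ) - (mu:ℂ)) := by
    have hs : r1 + r2 = (lam:ℝ) - mu := by rw [hr1def, hr2def]; ring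
    have hsq : Real.sqrt Δr ^ 2 = Δr := Real.sq_sqrt hΔ0
    have hΔr : Δr = ((lam:ℝ) - mu)^2 + 4*((k:ℝ) - mu) := by rw [hΔrdef]; push_cast; ring
    have hp : r1 * r2 = -((k:ℝ) - mu) := by
      have h1 : r1 * r2 = (((lam:ℝ) - mu)^2 - Real.sqrt Δr ^ 2) / 4 := by
        rw [hr1def, hr2def]; ring
      rw [h1, hsq, hΔr]; ring
    intro z
    have hsC : (r1:ℂ) + (r2:ℂ) = (lam:ℂ) - (mu:ℂ) := by
      rw [← Complex.ofReal_add, hs]; push_cast; ring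
    have hpC : (r1:ℂ) * (r2:ℂ) = -((k:ℂ) - (mu:ℂ)) := by
      rw [← Complex.ofReal_mul, hp]; push_cast; ring
    calc (z - (r1:ℂ)) * (z - (r2:ℂ))
        = z^2 - ((r1:ℂ)+(r2:ℂ)) * z + (r1:ℂ)*(r2:ℂ) := by ring
      _ = z^2 - ((lam:ℂ) - (mu:ℂ)) * z - ((k:ℂ) - (mu:ℂ)) := by rw [hsC, hpC]; ring
  -- finiteness
  have hDfin : D.Finite := Set.toFinite D
  set Df : Finset G := hDfin.toFinset with hDfdef
  have hmem : ∀ x : G, x ∈ Df ↔ x ∈ D := fun x => hDfin.mem_toFinset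
  have hDcard : Df.card = k := by
    rw [← hk, Nat.card_coe_set_eq, Set.ncard_eq_toFinset_card _ hDfin]
  have hfs : ∀ χ : AddChar G ℂ, ∑ᶠ d ∈ D, χ d = ∑ d ∈ Df, χ d :=
    fun χ => finsum_mem_eq_finite_toFinset_sum _ hDfin
  have htriv : ∀ χ : AddChar G ℂ, χ = 1 → ∑ᶠ d ∈ D, χ d = (k:ℂ) := by
    intro χ hχ
    rw [hfs, hχ]
    simp [hDcard]
  -- the pair-counting function
  set N : G → ℕ := fun g =>
    (univ.filter fun p : G × G => p.1 ∈ D ∧ p.2 ∈ D ∧ p.1 ≠ p.2 ∧ p.1 - p.2 = g).card with hNdef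
  have hNcard : ∀ g : G,
      Nat.card {p : G × G // p.1 ∈ D ∧ p.2 ∈ D ∧ p.1 ≠ p.2 ∧ p.1 - p.2 = g} = N g := by
    intro g
    rw [Nat.card_eq_fintype_card, Fintype.card_subtype, hNdef]
  have hN0 : N 0 = 0 := by
    rw [hNdef]
    simp only [Finset.card_eq_zero, Finset.filter_eq_empty_iff]
    intro p _
    rintro ⟨-, -, hne, hz⟩
    exact hne (sub_eq_zero.mp hz)
  have hfiber : ∀ g : G, g ≠ 0 →
      (((Df ×ˢ Df).filter fun p => p.1 - p.2 = g)).card = N g := by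
    intro g hg
    rw [hNdef]
    congr 1
    ext p
    simp only [Finset.mem_filter, Finset.mem_product, Finset.mem_univ, true_and, hmem]
    constructor
    · rintro ⟨⟨h1, h2⟩, h3⟩
      refine ⟨h1, h2, fun he => hg ?_, h3⟩
      rw [← h3, he, sub_self]
    · rintro ⟨h1, h2, -, h4⟩
      exact ⟨⟨h1, h2⟩, h4⟩
  have hfiber0 : (((Df ×ˢ Df).filter fun p => p.1 - p.2 = (0:G))).card = k := by
    have himg : ((Df ×ˢ Df).filter fun p => p.1 - p.2 = (0:G)) = Df.image (fun d => (d, d)) := by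
      ext p
      simp only [Finset.mem_filter, Finset.mem_product, Finset.mem_image, sub_eq_zero]
      constructor
      · rintro ⟨⟨h1, h2⟩, h3⟩
        exact ⟨p.1, h1, Prod.ext rfl h3⟩
      · rintro ⟨d, hd, rfl⟩
        exact ⟨⟨hd, hd⟩, rfl⟩
    rw [himg, Finset.card_image_of_injective _ (fun a b h => (Prod.ext_iff.mp h).1), hDcard]
  -- membership is symmetric under negation
  have hmemneg : ∀ x : G, -x ∈ D ↔ x ∈ D := by
    intro x
    rw [← Set.mem_neg, hsym]
  -- the key character sum identity
  have hkey : ∀ χ : AddChar G ℂ,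
      (∑ d ∈ Df, χ d)^2 = (k:ℂ) + ∑ g : G, (N g : ℂ) * χ g := by
    intro χ
    have hneg : ∑ d ∈ Df, χ d = ∑ d ∈ Df, χ (-d) := by
      refine Finset.sum_equiv (Equiv.neg G) (fun i => ?_) (fun i hi => ?_)
      · simp only [Equiv.neg_apply, hmem]
        exact (hmemneg i).symm
      · simp
    have step1 : (∑ d ∈ Df, χ d)^2 = ∑ p ∈ Df ×ˢ Df, χ (p.1 - p.2) := by
      calc (∑ d ∈ Df, χ d)^2 = (∑ d1 ∈ Df, χ d1) * (∑ d2 ∈ Df, χ (-d2)) := by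
            rw [← hneg]; ring
        _ = ∑ d1 ∈ Df, ∑ d2 ∈ Df, χ d1 * χ (-d2) := by rw [Finset.sum_mul_sum]
        _ = ∑ p ∈ Df ×ˢ Df, χ (p.1 - p.2) := by
            rw [← Finset.sum_product']
            refine Finset.sum_congr rfl fun p _ => ?_
            rw [sub_eq_add_neg, AddChar.map_add_eq_mul]
    have step2 : ∑ p ∈ Df ×ˢ Df, χ (p.1 - p.2)
        = ∑ g : G, ((((Df ×ˢ Df).filter fun p => p.1 - p.2 = g)).card : ℂ) * χ g := by
      rw [← Finset.sum_fiberwise' (Df ×ˢ Df) (fun p => p.1 - p.2) (fun g => χ g)]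
      refine Finset.sum_congr rfl fun g _ => ?_
      rw [Finset.sum_const, nsmul_eq_mul]
    rw [step1, step2]
    rw [← Finset.sum_erase_add _ _ (Finset.mem_univ (0:G)),
        ← Finset.sum_erase_add univ (fun g => (N g : ℂ) * χ g) (Finset.mem_univ (0:G))]
    have herase : ∑ g ∈ univ.erase (0:G),
        ((((Df ×ˢ Df).filter fun p => p.1 - p.2 = g)).card : ℂ) * χ g
        = ∑ g ∈ univ.erase (0:G), (N g : ℂ) * χ g := by
      refine Finset.sum_congr rfl fun g hg => ?_
      rw [hfiber g (Finset.ne_of_mem_erase hg)]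
    rw [herase, hfiber0, hN0, AddChar.map_zero_eq_one]
    push_cast
    ring
  -- the target value function
  set M : G → ℂ := fun g => if g ∈ D then (lam:ℂ) else if g = 0 then 0 else (mu:ℂ) with hMdef
  have hM0 : M 0 = 0 := by simp [hMdef, h0]
  have h01 : (0 : AddChar G ℂ) = 1 := rfl
  have hMkey : ∀ χ : AddChar G ℂ, χ ≠ 1 →
      ∑ g : G, M g * χ g = ((lam:ℂ) - mu) * (∑ d ∈ Df, χ d) - mu := by
    intro χ hχ
    have hzero : ∑ g : G, χ g = 0 := by
      rw [AddChar.sum_eq_zero_iff_ne_zero]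
      rw [h01]
      exact hχ
    have hpt : ∀ g : G, M g * χ g
        = (if g ∈ Df then ((lam:ℂ) - mu) * χ g else 0) + (mu:ℂ) * χ g
          + (if g = 0 then -(mu:ℂ) else 0) := by
      intro g
      by_cases hg : g ∈ D
      · have hg0 : g ≠ 0 := fun h => h0 (h ▸ hg)
        simp only [hMdef, hg, if_pos, hmem, hg0, if_neg, if_false]
        ring
      · by_cases hg0 : g = 0
        · subst hg0
          simp only [hMdef, hg, if_neg, if_false, if_pos, hmem, if_true,
            AddChar.map_zero_eq_one, not_false_iff]
          simp [hg]
        · simp only [hMdef, hg, hg0, if_neg, if_false, hmem, not_false_iff]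
          simp [hg, hg0]
    rw [Finset.sum_congr rfl fun g _ => hpt g]
    rw [Finset.sum_add_distrib, Finset.sum_add_distrib]
    rw [Finset.sum_ite_mem, Finset.univ_inter, ← Finset.mul_sum,
      ← Finset.mul_sum, hzero, mul_zero]
    have hlast : ∑ g : G, (if g = 0 then -(mu:ℂ) else 0) = -(mu:ℂ) := by simp
    rw [hlast]
    ring
  constructor
  · -- forward direction
    rintro ⟨-, -, hlam, hmu⟩ χ
    refine ⟨htriv χ, ?_⟩
    intro hχ
    have hNM : ∀ g : G, (N g : ℂ) = M g := by
      intro g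
      by_cases hg : g ∈ D
      · have hg0 : g ≠ 0 := fun h => h0 (h ▸ hg)
        have h1 := hlam g hg hg0
        rw [hNcard g] at h1
        simp only [hMdef, hg, if_pos]
        exact_mod_cast h1
      · by_cases hg0 : g = 0
        · subst hg0
          rw [hN0, hM0]
          simp
        · have h1 := hmu g hg hg0
          rw [hNcard g] at h1
          simp only [hMdef, hg, hg0, if_neg, if_false, not_false_iff]
          exact_mod_cast h1
    set S : ℂ := ∑ d ∈ Df, χ d with hSdef
    have hq : S^2 = (k:ℂ) + (((lam:ℂ) - mu) * S - mu) := by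
      rw [hSdef, hkey χ, Finset.sum_congr rfl fun g _ => by rw [hNM g], hMkey χ hχ]
    have hfac : (S - (r1:ℂ)) * (S - (r2:ℂ)) = 0 := by
      rw [hquad S]
      linear_combination hq
    rcases mul_eq_zero.mp hfac with h | h
    · left; rw [hfs]; exact sub_eq_zero.mp h
    · right; rw [hfs]; exact sub_eq_zero.mp h
  · -- backward direction
    intro hch
    refine ⟨hv, hk, ?_, ?_⟩ <;>
    · -- we first show N g = M g for all g
      have hF : ∀ χ : AddChar G ℂ, χ ≠ 1 → ∑ g : G, ((N g : ℂ) - M g) * χ g = 0 := by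
        intro χ hχ
        have hS : (∑ d ∈ Df, χ d) = (r1:ℂ) ∨ (∑ d ∈ Df, χ d) = (r2:ℂ) := by
          have := (hch χ).2 hχ
          rwa [hfs] at this
        have hfac : ((∑ d ∈ Df, χ d) - (r1:ℂ)) * ((∑ d ∈ Df, χ d) - (r2:ℂ)) = 0 := by
          rcases hS with h | h <;> rw [h] <;> ring
        rw [hquad] at hfac
        have h1 := hkey χ
        have h2 := hMkey χ hχ
        have hexp : ∑ g : G, ((N g : ℂ) - M g) * χ g
            = (∑ g : G, (N g : ℂ) * χ g) - ∑ g : G, M g * χ g := by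
          rw [← Finset.sum_sub_distrib]
          exact Finset.sum_congr rfl fun g _ => by ring
        rw [hexp, h2]
        linear_combination hfac - h1
      set f : G → ℂ := fun g => (N g : ℂ) - M g with hfdef
      have hf0 : f 0 = 0 := by
        rw [hfdef]
        simp [hN0, hM0]
      have hinv : ∀ a : G, (Fintype.card G : ℂ) * f a = ∑ g : G, f g := by
        intro a
        have hT1 : ∑ χ : AddChar G ℂ, ∑ g : G, f g * χ (g - a)
            = (Fintype.card G : ℂ) * f a := by
          rw [Finset.sum_comm]
          have hg : ∀ g : G, ∑ χ : AddChar G ℂ, f g * χ (g - a)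
              = f g * (if g - a = 0 then (Fintype.card G : ℂ) else 0) := by
            intro g
            rw [← Finset.mul_sum, AddChar.sum_apply_eq_ite]
          rw [Finset.sum_congr rfl fun g _ => hg g]
          simp only [sub_eq_zero, mul_ite, mul_zero]
          rw [Finset.sum_ite_eq' univ a]
          simp [mul_comm]
        have hT2 : ∑ χ : AddChar G ℂ, ∑ g : G, f g * χ (g - a)
            = ∑ g : G, f g := by
          have hg : ∀ χ : AddChar G ℂ, ∑ g : G, f g * χ (g - a)
              = (∑ g : G, f g * χ g) * χ (-a) := by
            intro χ
            rw [Finset.sum_mul]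
            refine Finset.sum_congr rfl fun g _ => ?_
            rw [mul_assoc, ← AddChar.map_add_eq_mul, ← sub_eq_add_neg]
          rw [Finset.sum_congr rfl fun χ _ => hg χ]
          rw [Finset.sum_eq_single_of_mem (1 : AddChar G ℂ) (Finset.mem_univ _)]
          · simp
          · intro χ _ hχ
            rw [hF χ hχ, zero_mul]
        rw [← hT1, hT2]
      have hcard0 : (Fintype.card G : ℂ) ≠ 0 := by
        exact_mod_cast Fintype.card_ne_zero
      have hsumf : ∑ g : G, f g = 0 := by
        have := hinv 0
        rw [hf0, mul_zero] at this
        exact this.symm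
      have hfa : ∀ a : G, f a = 0 := by
        intro a
        have := hinv a
        rw [hsumf] at this
        exact (mul_eq_zero.mp this).resolve_left hcard0
      have hNM : ∀ g : G, (N g : ℂ) = M g := by
        intro g
        have := hfa g
        rw [hfdef] at this
        exact sub_eq_zero.mp this
      first
      | · intro g hg hg0
          have := hNM g
          simp only [hMdef, hg, if_pos] at this
          rw [hNcard g]
          exact_mod_cast this
      | · intro g hg hg0
          have := hNM g
          simp only [hMdef, hg, hg0, if_neg, if_false, not_false_iff] at this
          rw [hNcard g]
          exact_mod_cast this
end

section
/- Let ℓ ≥ 1 and 1 ≤ j ≤ ℓ, and define Q'_{ℓ,j} : 𝔽₄^{2ℓ−1} → 𝔽₄ by Q'_{ℓ,j}(x₂, x₃, …, x_{2ℓ}) = Q_{ℓ,j}(0, x₂, x₃, …, x_{2ℓ}). Then Q'_{ℓ,j} is a nonsingular (parabolic) quadratic form in 2ℓ−1 indeterminates: if w ∈ 𝔽₄^{2ℓ−1} satisfies Q'_{ℓ,j}(w) = 0 and B'(w,v) = 0 for all v ∈ 𝔽₄^{2ℓ−1}, where B'(u,v) = Q'_{ℓ,j}(u+v) − Q'_{ℓ,j}(u)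 − Q'_{ℓ,j}(v) is the polar form, then w = 0. -/
/-- The quadratic form `Q_{ℓ,j}(x₁,…,x_{2ℓ}) = Σ_{i=1}^{j} (α x_{2i-1}² + x_{2i-1}x_{2i} + x_{2i}²)
+ Σ_{i=j+1}^{ℓ} x_{2i-1}x_{2i}`  (coordinates are 0-indexed in Lean). -/
def Qform {F4 : Type*} [Field F4] (α : F4) (ℓ j : ℕ) (x : Fin (2 * ℓ) → F4) : F4 :=
  ∑ i : Fin ℓ,
    (let a := x ⟨2 * i.val, by have := i.isLt; omega⟩
     let b := x ⟨2 * i.val + 1, by have := i.isLt; omega⟩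
     if i.val < j then α * a ^ 2 + a * b + b ^ 2 else a * b)

theorem stmt8 (F4 : Type*) [Field F4] [Fintype F4] (hc : Fintype.card F4 = 4)
    (α : F4) (hα : α ^ 2 = α + 1)
    (ℓ j : ℕ) (hℓ : 1 ≤ ℓ) (hj : 1 ≤ j) (hjl : j ≤ ℓ)
    -- `emb w` is the vector (0, w₂, w₃, …, w_{2ℓ}) of 𝔽₄^{2ℓ} obtained by prepending 0 to w
    (emb : (Fin (2 * ℓ - 1) → F4) → (Fin (2 * ℓ) → F4))
    (hemb : ∀ w i, emb w i = if h : i.val = 0 then 0 else w ⟨i.val - 1, by have := i.isLt; omega⟩)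
    -- Q'_{ℓ,j}(x₂,…,x_{2ℓ}) = Q_{ℓ,j}(0, x₂, …, x_{2ℓ})
    (Q' : (Fin (2 * ℓ - 1) → F4) → F4) (hQ' : ∀ w, Q' w = Qform α ℓ j (emb w))
    (B' : (Fin (2 * ℓ - 1) → F4) → (Fin (2 * ℓ - 1) → F4) → F4)
    (hB' : ∀ u v, B' u v = Q' (u + v) - Q' u - Q' v) :
    -- Q'_{ℓ,j} is nonsingular
    ∀ w : Fin (2 * ℓ - 1) → F4, Q' w = 0 →
      (∀ v : Fin (2 * ℓ - 1) → F4, B' w v = 0) → w = 0 := by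
  intro w hQ hB
  have h4 : (4 : F4) = 0 := by
    have := FiniteField.cast_card_eq_zero F4
    rw [hc] at this; exact_mod_cast this
  have h2 : (2 : F4) = 0 := by
    have hsq : (2 : F4) ^ 2 = 0 := by linear_combination h4
    exact pow_eq_zero_iff (n := 2) (by norm_num) |>.mp hsq
  have hadd : ∀ u v : Fin (2 * ℓ - 1) → F4, ∀ t, emb (u + v) t = emb u t + emb v t := by
    intro u v t
    rw [hemb, hemb, hemb]
    split_ifs with h
    · ring
    · rfl
  have hBform : ∀ u v, B' u v =
      ∑ i : Fin ℓ,
        (emb u ⟨2 * i.val, by have := i.isLt; omega⟩ * emb v ⟨2 * i.val + 1, by have := i.isLt; omega⟩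
         + emb u ⟨2 * i.val + 1, by have := i.isLt; omega⟩ * emb v ⟨2 * i.val, by have := i.isLt; omega⟩) := by
    intro u v
    rw [hB', hQ', hQ', hQ', Qform, Qform, Qform, ← Finset.sum_sub_distrib,
      ← Finset.sum_sub_distrib]
    refine Finset.sum_congr rfl ?_
    intro i _
    simp only [hadd]
    split_ifs with h
    · linear_combination (α * emb u ⟨2 * i.val, by have := i.isLt; omega⟩ * emb v ⟨2 * i.val, by have := i.isLt; omega⟩
        + emb u ⟨2 * i.val + 1, by have := i.isLt; omega⟩ * emb v ⟨2 * i.val + 1, by have := i.isLt; omega⟩) * h2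
    · ring
  have hz : ∀ m : Fin (2 * ℓ - 1), 1 ≤ m.val → w m = 0 := by
    intro m hm
    have hml := m.isLt
    rcases Nat.even_or_odd (m.val + 1) with ⟨r, hr⟩ | ⟨r, hr⟩
    · -- m.val + 1 = 2r with r ≥ 1 : pair i₀ = r, partner coordinate 2r+1
      have hr1 : 1 ≤ r := by omega
      have hk : 2 * r < 2 * ℓ - 1 := by omega
      have key := hB (Pi.single ⟨2 * r, hk⟩ 1)
      rw [hBform] at key
      rw [Finset.sum_eq_single (⟨r, by omega⟩ : Fin ℓ)] at key
      · simp only [hemb, Fin.val_mk] at key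
        have e1 : ¬(2 * r = 0) := by omega
        have e2 : ¬(2 * r + 1 = 0) := by omega
        simp only [dif_neg e1, dif_neg e2] at key
        simp only [Pi.single_apply, Fin.mk.injEq] at key
        have t1 : 2 * r + 1 - 1 = 2 * r := by omega
        have t2 : ¬(2 * r - 1 = 2 * r) := by omega
        simp only [if_pos t1, if_neg t2, mul_one, mul_zero, add_zero] at key
        have hm2 : m = ⟨2 * r - 1, by omega⟩ := Fin.ext (by simp; omega)
        rw [hm2]
        exact key
      · intro i _ hi
        have hine : i.val ≠ r := fun hc => hi (Fin.ext (by simpa using hc))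
        simp only [hemb, Fin.val_mk, Pi.single_apply, Fin.mk.injEq]
        have n1 : ¬(2 * i.val + 1 - 1 = 2 * r) := by omega
        have n2 : ¬(2 * i.val - 1 = 2 * r) := by omega
        simp only [if_neg n1, if_neg n2, dite_eq_ite, ite_self, mul_zero, add_zero, zero_add]
      · intro h; exact absurd (Finset.mem_univ _) h
    · -- m.val + 1 = 2r + 1 with r ≥ 1 : pair i₀ = r, partner coordinate 2r
      have hr1 : 1 ≤ r := by omega
      have hk : 2 * r - 1 < 2 * ℓ - 1 := by omega
      have key := hB (Pi.single ⟨2 * r - 1, hk⟩ 1)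
      rw [hBform] at key
      rw [Finset.sum_eq_single (⟨r, by omega⟩ : Fin ℓ)] at key
      · simp only [hemb, Fin.val_mk] at key
        have e1 : ¬(2 * r = 0) := by omega
        have e2 : ¬(2 * r + 1 = 0) := by omega
        simp only [dif_neg e1, dif_neg e2] at key
        simp only [Pi.single_apply, Fin.mk.injEq] at key
        have t2 : ¬(2 * r + 1 - 1 = 2 * r - 1) := by omega
        simp only [if_pos rfl, if_neg t2, if_true, mul_one, mul_zero, add_zero, zero_add] at key
        have hm2 : m = ⟨2 * r + 1 - 1, by omega⟩ := Fin.ext (by simp; omega)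
        rw [hm2]
        exact key
      · intro i _ hi
        have hine : i.val ≠ r := fun hc => hi (Fin.ext (by simpa using hc))
        simp only [hemb, Fin.val_mk, Pi.single_apply, Fin.mk.injEq]
        have n1 : ¬(2 * i.val + 1 - 1 = 2 * r - 1) := by omega
        have n2 : ¬(2 * i.val - 1 = 2 * r - 1) := by omega
        simp only [if_neg n1, if_neg n2, dite_eq_ite, ite_self, mul_zero, add_zero, zero_add]
      · intro h; exact absurd (Finset.mem_univ _) h
  have h0 : w ⟨0, by omega⟩ = 0 := by
    rw [hQ', Qform] at hQ
    rw [Finset.sum_eq_single (⟨0, by omega⟩ : Fin ℓ)] at hQ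
    · simp only [hemb, Fin.val_mk, show (2 * 0 : ℕ) = 0 from rfl,
        show (2 * 0 + 1 : ℕ) = 1 from rfl] at hQ
      simp only [dif_pos rfl, dite_true, dif_neg (by omega : ¬(1 : ℕ) = 0),
        if_pos (show 0 < j from hj), zero_pow (by norm_num : (2 : ℕ) ≠ 0),
        mul_zero, zero_mul, add_zero, zero_add] at hQ
      have hzz := pow_eq_zero_iff (n := 2) (by norm_num) |>.mp hQ
      exact hzz
    · intro i _ hi
      have hi0 : 1 ≤ i.val := by
        rcases Nat.eq_zero_or_pos i.val with h | h
        · exact absurd (Fin.ext (by simpa using h)) hi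
        · exact h
      simp only [hemb, Fin.val_mk]
      rw [dif_neg (by omega : ¬(2 * i.val = 0)), dif_neg (by omega : ¬(2 * i.val + 1 = 0))]
      rw [hz _ (by simp; omega), hz _ (by simp; omega)]
      split_ifs <;> ring
    · intro h; exact absurd (Finset.mem_univ _) h
  funext m
  rcases Nat.eq_zero_or_pos m.val with h | h
  · have : m = ⟨0, by omega⟩ := Fin.ext (by simpa using h)
    rw [this, h0]; rfl
  · rw [hz m h]; rfl
end

section
/- Let ℓ ≥ 2 and 1 ≤ j ≤ ℓ, and let w = (w₁, w₂, …, w_{2ℓ}) ∈ 𝔽₄^{2ℓ} with w₂ ≠ 0. Then χ_w(O₀) = −1 + 4^{ℓ−1} or χ_w(O₀) = −1 − 4^{ℓ−1}. -/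
set_option linter.unusedSectionVars false
set_option linter.unusedVariables false

open scoped Classical in
/-- The value `(-1)^{tr(t)} ∈ ℂ`, where `tr : 𝔽₄ → 𝔽₂`, `tr(t) = t + t²`, is the trace map. -/
noncomputable def chi4 {F4 : Type*} [Field F4] (t : F4) : ℂ :=
  if t + t ^ 2 = 0 then 1 else -1

/-- The character sum `χ_w(S) = Σ_{v ∈ S} (-1)^{tr(Σ_i w_i v_i)}`. -/
noncomputable def chiSum {F4 : Type*} [Field F4] {m : ℕ} (w : Fin m → F4)
    (S : Set (Fin m → F4)) : ℂ :=
  ∑ᶠ v ∈ S, chi4 (∑ i, w i * v i)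

section
variable {F4 : Type*} [Field F4] [Fintype F4]

lemma char2F4 (hc : Fintype.card F4 = 4) : CharP F4 2 := by
  haveI := ringChar.charP F4
  haveI hfact : Fact (Nat.Prime (ringChar F4)) := ⟨CharP.char_is_prime F4 (ringChar F4)⟩
  obtain ⟨n, hcard⟩ := FiniteField.card F4 (ringChar F4)
  have hdvd : ringChar F4 ∣ 4 := hc ▸ hcard.2 ▸ dvd_pow_self _ n.pos.ne'
  have h2 : ringChar F4 = 2 := by
    have h4 : (4:ℕ) = 2^2 := rfl
    have := hfact.out.dvd_of_dvd_pow (h4 ▸ hdvd)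
    exact (Nat.prime_dvd_prime_iff_eq hfact.out Nat.prime_two).mp this
  exact h2 ▸ ringChar.charP F4

lemma addself4 (hc : Fintype.card F4 = 4) (x : F4) : x + x = 0 := by
  haveI := char2F4 hc
  exact CharTwo.add_self_eq_zero x

lemma pow4F4 (hc : Fintype.card F4 = 4) (x : F4) : x ^ 4 = x := by
  have := FiniteField.pow_card x
  rwa [hc] at this

lemma tr01 (hc : Fintype.card F4 = 4) (x : F4) : x + x^2 = 0 ∨ x + x^2 = 1 := by
  haveI := char2F4 hc
  have h : (x + x^2)^2 = x + x^2 := by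
    rw [CharTwo.add_sq, ← pow_mul, show 2*2=4 from rfl, pow4F4 hc, add_comm]
  rcases mul_eq_zero.mp (show (x + x^2) * (x + x^2 - 1) = 0 by
      rw [mul_sub, mul_one, ← sq, h, sub_self]) with h1 | h1
  · exact Or.inl h1
  · exact Or.inr (by linear_combination h1)

lemma chi4_zero' : chi4 (0 : F4) = 1 := by simp [chi4]

lemma chi4_add (hc : Fintype.card F4 = 4) (s t : F4) :
    chi4 (s + t) = chi4 s * chi4 t := by
  classical
  haveI := char2F4 hc
  have hst : (s + t) + (s + t)^2 = (s + s^2) + (t + t^2) := by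
    rw [CharTwo.add_sq]; ring
  unfold chi4
  rcases tr01 hc s with hs | hs <;> rcases tr01 hc t with ht | ht <;>
    rw [hst, hs, ht] <;> norm_num
  exact CharTwo.two_eq_zero

lemma chi4_sq (hc : Fintype.card F4 = 4) (t : F4) : chi4 t * chi4 t = 1 := by
  classical
  unfold chi4; split_ifs <;> norm_num

end

section
variable {F4 : Type*} [Field F4] [Fintype F4]

lemma chi4_frob (hc : Fintype.card F4 = 4) (t : F4) : chi4 (t^2) = chi4 t := by
  classical
  unfold chi4
  have h : t^2 + (t^2)^2 = t + t^2 := by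
    rw [← pow_mul, show 2*2=4 from rfl, pow4F4 hc, add_comm]
  rw [h]

lemma sum_chi4 (hc : Fintype.card F4 = 4) {α : F4} (hα : α ^ 2 = α + 1) :
    ∑ t : F4, chi4 t = 0 := by
  classical
  have htr : α + α^2 = 1 := by rw [hα, ← add_assoc, addself4 hc, zero_add]
  have hval : chi4 α = -1 := by unfold chi4; rw [htr]; simp
  have hshift : ∑ t : F4, chi4 (α + t) = ∑ t : F4, chi4 t :=
    Fintype.sum_equiv (Equiv.addLeft α) _ _ (fun t => rfl)
  have : chi4 α * ∑ t : F4, chi4 t = ∑ t : F4, chi4 t := by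
    rw [Finset.mul_sum]
    rw [← hshift]
    exact Finset.sum_congr rfl (fun t _ => (chi4_add hc α t).symm)
  rw [hval] at this
  linear_combination -this / 2

open scoped Classical in
lemma sum_chi4_mul (hc : Fintype.card F4 = 4) {α : F4} (hα : α ^ 2 = α + 1) (s : F4) :
    ∑ t : F4, chi4 (s * t) = if s = 0 then (4:ℂ) else 0 := by
  classical
  split_ifs with h
  · subst h; simp [chi4_zero', hc]
  · rw [show (0:ℂ) = ∑ t : F4, chi4 t from (sum_chi4 hc hα).symm]
    exact Fintype.sum_equiv (Equiv.mulLeft₀ s h) _ _ (fun t => rfl)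

lemma sq_bij (hc : Fintype.card F4 = 4) : Function.Bijective (fun t : F4 => t ^ 2) := by
  haveI := char2F4 hc
  rw [← Finite.injective_iff_bijective]
  intro a b hab
  simp only at hab
  have : (a + b)^2 = 0 := by
    rw [CharTwo.add_sq, hab, ← CharTwo.add_sq, addself4 hc]
    exact zero_pow two_ne_zero
  have h0 : a + b = 0 := (pow_eq_zero_iff two_ne_zero).mp this
  linear_combination h0 - addself4 hc b

open scoped Classical in
lemma sum_chi4_mul_sq (hc : Fintype.card F4 = 4) {α : F4} (hα : α ^ 2 = α + 1) (s : F4) :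
    ∑ t : F4, chi4 (s * t ^ 2) = if s = 0 then (4:ℂ) else 0 := by
  classical
  rw [← sum_chi4_mul hc hα s]
  exact Fintype.sum_bijective _ (sq_bij hc) (fun t => chi4 (s * t ^ 2)) (fun t => chi4 (s * t))
    (fun t => rfl)

lemma chi4_sum {ι : Type*} (hc : Fintype.card F4 = 4) (s : Finset ι) (f : ι → F4) :
    chi4 (∑ i ∈ s, f i) = ∏ i ∈ s, chi4 (f i) := by
  classical
  induction s using Finset.induction with
  | empty => simp [chi4_zero']
  | insert a s' hni ih =>
                     rw [Finset.sum_insert hni, Finset.prod_insert hni, chi4_add hc, ih]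

end

section
variable {F4 : Type*} [Field F4] [Fintype F4]

open scoped Classical in
lemma blockSum (hc : Fintype.card F4 = 4) {α : F4} (hα : α ^ 2 = α + 1)
    (c u v : F4) (hcne : c ≠ 0) (q : F4 → F4 → F4)
    (hq : ∀ a b s t, q (a+s) (b+t) = q a b + q s t + (a*t + b*s)) :
    (∑ p : F4 × F4, chi4 (c * q p.1 p.2 + u * p.1 + v * p.2)) = 4 ∨
    (∑ p : F4 × F4, chi4 (c * q p.1 p.2 + u * p.1 + v * p.2)) = -4 := by
  haveI := char2F4 hc
  set f : F4 × F4 → ℂ := fun p => chi4 (c * q p.1 p.2 + u * p.1 + v * p.2) with hf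
  set S : ℂ := ∑ p : F4 × F4, f p with hS
  have hq0 : q 0 0 = 0 := by
    have h := hq 0 0 0 0
    simp only [add_zero, zero_add, mul_zero, zero_mul] at h
    linear_combination -h
  have hSS : S * S = 16 := by
    rw [hS, Finset.sum_mul_sum]
    have step1 : ∀ p : F4 × F4, ∑ r : F4 × F4, f p * f r = ∑ r : F4 × F4, f p * f (p + r) :=
      fun p => (Fintype.sum_equiv (Equiv.addLeft p) _ _ (fun r => rfl)).symm
    calc (∑ p : F4 × F4, ∑ r : F4 × F4, f p * f r)
        = ∑ p : F4 × F4, ∑ r : F4 × F4, f p * f (p + r) := by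
          exact Finset.sum_congr rfl (fun p _ => step1 p)
      _ = ∑ p : F4 × F4, ∑ r : F4 × F4,
            chi4 (c * q r.1 r.2 + u * r.1 + v * r.2) *
              (chi4 ((c * r.2) * p.1) * chi4 ((c * r.1) * p.2)) := by
          refine Finset.sum_congr rfl (fun p _ => Finset.sum_congr rfl (fun r _ => ?_))
          rw [hf]
          simp only [Prod.fst_add, Prod.snd_add]
          rw [← chi4_add hc, ← chi4_add hc, ← chi4_add hc]
          congr 1
          have e1 := hq p.1 p.2 r.1 r.2
          linear_combination c * e1 + c * addself4 hc (q p.1 p.2) + u * addself4 hc p.1 +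
            v * addself4 hc p.2
      _ = ∑ r : F4 × F4, ∑ p : F4 × F4,
            chi4 (c * q r.1 r.2 + u * r.1 + v * r.2) *
              (chi4 ((c * r.2) * p.1) * chi4 ((c * r.1) * p.2)) := Finset.sum_comm
      _ = ∑ r : F4 × F4, chi4 (c * q r.1 r.2 + u * r.1 + v * r.2) *
            ((∑ a : F4, chi4 ((c * r.2) * a)) * (∑ b : F4, chi4 ((c * r.1) * b))) := by
          refine Finset.sum_congr rfl (fun r _ => ?_)
          rw [← Finset.mul_sum]
          congr 1
          rw [Finset.sum_mul_sum, Fintype.sum_prod_type]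
      _ = 16 := by
          rw [Finset.sum_eq_single (0 : F4 × F4)]
          · rw [sum_chi4_mul hc hα, sum_chi4_mul hc hα]
            simp only [Prod.fst_zero, Prod.snd_zero, hq0, mul_zero, zero_mul, add_zero,
              if_pos rfl, chi4_zero']
            norm_num
          · intro r _ hr
            rw [sum_chi4_mul hc hα, sum_chi4_mul hc hα]
            have : ¬(r.1 = 0 ∧ r.2 = 0) := by
              intro hx; exact hr (Prod.ext hx.1 hx.2)
            rcases Classical.em (r.1 = 0) with h1 | h1
            · have h2 : r.2 ≠ 0 := fun h2 => this ⟨h1, h2⟩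
              rw [if_neg (mul_ne_zero hcne h2)]
              simp
            · rw [if_neg (mul_ne_zero hcne h1)]
              simp
          · intro h; exact absurd (Finset.mem_univ _) h
  have factored : (S - 4) * (S + 4) = 0 := by linear_combination hSS
  rcases mul_eq_zero.mp factored with h | h
  · exact Or.inl (by linear_combination h)
  · exact Or.inr (by linear_combination h)

lemma prod_pm4 (n : ℕ) (B : Fin n → ℂ) (h : ∀ i, B i = 4 ∨ B i = -4) :
    (∏ i, B i) = 4 ^ n ∨ (∏ i, B i) = -(4 ^ n) := by
  induction n with
  | zero => left; simp
  | succ m ih =>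
    rw [Fin.prod_univ_succ, pow_succ]
    rcases h 0 with h0 | h0 <;> rcases ih (fun i => B i.succ) (fun i => h i.succ) with hp | hp <;>
      rw [h0, hp] <;> [left; right; right; left] <;> ring

end

section

def pairFun {β : Type*} {ℓ : ℕ} (y : Fin ℓ → β × β) : Fin (2 * ℓ) → β :=
  fun k => if _ : k.val % 2 = 0 then (y ⟨k.val / 2, by have := k.isLt; omega⟩).1
           else (y ⟨k.val / 2, by have := k.isLt; omega⟩).2

lemma pairFun_even {β : Type*} {ℓ : ℕ} (y : Fin ℓ → β × β) (i : ℕ) (h : 2 * i < 2 * ℓ) :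
    pairFun y ⟨2 * i, h⟩ = (y ⟨i, by omega⟩).1 := by
  have h1 : (2 * i) % 2 = 0 := by omega
  have h2 : (2 * i) / 2 = i := by omega
  simp only [pairFun, h1, dif_pos]
  congr 1
  simp [Fin.ext_iff, h2]

lemma pairFun_odd {β : Type*} {ℓ : ℕ} (y : Fin ℓ → β × β) (i : ℕ) (h : 2 * i + 1 < 2 * ℓ) :
    pairFun y ⟨2 * i + 1, h⟩ = (y ⟨i, by omega⟩).2 := by
  have h1 : ¬((2 * i + 1) % 2 = 0) := by omega
  have h2 : (2 * i + 1) / 2 = i := by omega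
  simp only [pairFun, h1, dif_neg, not_false_iff]
  congr 1
  simp [Fin.ext_iff, h2]

lemma pairFun_bijective {β : Type*} {ℓ : ℕ} :
    Function.Bijective (pairFun (β := β) (ℓ := ℓ)) := by
  constructor
  · intro y y' hyy
    funext i
    have he := congrFun hyy ⟨2 * i.val, by have := i.isLt; omega⟩
    have ho := congrFun hyy ⟨2 * i.val + 1, by have := i.isLt; omega⟩
    rw [pairFun_even, pairFun_even] at he
    rw [pairFun_odd, pairFun_odd] at ho
    have : (⟨i.val, by omega⟩ : Fin ℓ) = i := by apply Fin.ext; rfl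
    rw [this] at he ho
    exact Prod.ext he ho
  · intro x
    refine ⟨fun i => (x ⟨2 * i.val, by have := i.isLt; omega⟩,
                      x ⟨2 * i.val + 1, by have := i.isLt; omega⟩), ?_⟩
    funext k
    rcases Nat.even_or_odd k.val with ⟨m, hm⟩ | ⟨m, hm⟩
    · have hk : k = ⟨2 * m, by have := k.isLt; omega⟩ := by apply Fin.ext; simp; omega
      rw [hk, pairFun_even]
    · have hk : k = ⟨2 * m + 1, by have := k.isLt; omega⟩ := by apply Fin.ext; simp; omega
      rw [hk, pairFun_odd]

lemma sum_pair_range {M : Type*} [AddCommMonoid M] (g : ℕ → M) (n : ℕ) :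
    ∑ k ∈ Finset.range (2 * n), g k = ∑ i ∈ Finset.range n, (g (2 * i) + g (2 * i + 1)) := by
  induction n with
  | zero => simp
  | succ m ih =>
    have h2 : 2 * (m + 1) = (2 * m + 1) + 1 := by ring
    rw [h2, Finset.sum_range_succ, Finset.sum_range_succ, Finset.sum_range_succ, ih, add_assoc]

lemma sum_pair {M : Type*} [AddCommMonoid M] {ℓ : ℕ} (f : Fin (2 * ℓ) → M) :
    ∑ k, f k = ∑ i : Fin ℓ, (f ⟨2 * i.val, by have := i.isLt; omega⟩ +
      f ⟨2 * i.val + 1, by have := i.isLt; omega⟩) := by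
  classical
  set g : ℕ → M := fun k => if h : k < 2 * ℓ then f ⟨k, h⟩ else 0 with hg
  have h1 : ∑ k, f k = ∑ k ∈ Finset.range (2 * ℓ), g k := by
    rw [← Fin.sum_univ_eq_sum_range]
    refine Finset.sum_congr rfl (fun k _ => ?_)
    rw [hg]; simp only [Fin.is_lt, dif_pos, Fin.eta]
  have h2 : ∀ i : Fin ℓ, g (2 * i.val) + g (2 * i.val + 1) =
      f ⟨2 * i.val, by have := i.isLt; omega⟩ + f ⟨2 * i.val + 1, by have := i.isLt; omega⟩ := by
    intro i
    have ha : 2 * i.val < 2 * ℓ := by have := i.isLt; omega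
    have hb : 2 * i.val + 1 < 2 * ℓ := by have := i.isLt; omega
    rw [hg]; simp only [ha, hb, dif_pos]
  rw [h1, sum_pair_range]
  rw [← Fin.sum_univ_eq_sum_range (fun k => g (2 * k) + g (2 * k + 1)) ℓ]
  exact Finset.sum_congr rfl (fun i _ => h2 i)

end

theorem stmt11 (F4 : Type*) [Field F4] [Fintype F4] (hc : Fintype.card F4 = 4)
    (α : F4) (hα : α ^ 2 = α + 1)
    (ℓ j : ℕ) (hℓ : 2 ≤ ℓ) (hj : 1 ≤ j) (hjl : j ≤ ℓ)
    (Z : Set (Fin (2 * ℓ) → F4)) (hZ : Z = {x | x ≠ 0 ∧ Qform α ℓ j x = 0})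
    (O₀ : Set (Fin (2 * ℓ) → F4)) (hO₀ : O₀ = {x ∈ Z | x ⟨0, by omega⟩ = 0})
    (w : Fin (2 * ℓ) → F4) (hw : w ⟨1, by omega⟩ ≠ 0) :
    chiSum w O₀ = -1 + 4 ^ (ℓ - 1) ∨ chiSum w O₀ = -1 - 4 ^ (ℓ - 1) := by
  classical
  haveI := char2F4 hc
  subst hZ
  subst hO₀
  obtain ⟨n, rfl⟩ : ∃ n, ℓ = n + 1 := ⟨ℓ - 1, by omega⟩
  have hn : 1 ≤ n := by omega
  have hw1ne : w ⟨1, by omega⟩ ≠ 0 := hw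
  have hc₀ne : w ⟨1, by omega⟩ ^ 2 ≠ 0 := pow_ne_zero _ hw1ne
  -- block forms
  set qb : Fin (n + 1) → F4 → F4 → F4 :=
    fun i a b => if i.val < j then α * a ^ 2 + a * b + b ^ 2 else a * b with hqbdef
  have hqb : ∀ (i : Fin (n+1)) (a b s t : F4),
      qb i (a+s) (b+t) = qb i a b + qb i s t + (a*t + b*s) := by
    intro i a b s t
    rw [hqbdef]
    simp only
    split_ifs
    · rw [CharTwo.add_sq, CharTwo.add_sq]; ring
    · ring
  have hQ : ∀ y : Fin (n+1) → F4 × F4,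
      Qform α (n+1) j (pairFun y) = ∑ i : Fin (n+1), qb i (y i).1 (y i).2 := by
    intro y
    unfold Qform
    refine Finset.sum_congr rfl (fun i _ => ?_)
    rw [pairFun_even y i.val (by have := i.isLt; omega),
        pairFun_odd y i.val (by have := i.isLt; omega)]
    try simp only [Fin.eta, hqbdef]
  have hL : ∀ y : Fin (n+1) → F4 × F4,
      (∑ k, w k * pairFun y k) = ∑ i : Fin (n+1),
        (w ⟨2*i.val, by have := i.isLt; omega⟩ * (y i).1 +
         w ⟨2*i.val+1, by have := i.isLt; omega⟩ * (y i).2) := by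
    intro y
    rw [sum_pair (fun k => w k * pairFun y k)]
    refine Finset.sum_congr rfl (fun i _ => ?_)
    rw [pairFun_even y i.val (by have := i.isLt; omega),
        pairFun_odd y i.val (by have := i.isLt; omega)]
    try simp only [Fin.eta]
  -- the finset A
  set A : Finset (Fin (2*(n+1)) → F4) :=
    Finset.univ.filter (fun x => x ⟨0, by omega⟩ = 0 ∧ Qform α (n+1) j x = 0) with hA
  have hQ0 : Qform α (n+1) j (0 : Fin (2*(n+1)) → F4) = 0 := by
    unfold Qform
    refine Finset.sum_eq_zero (fun i _ => ?_)
    simp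
  have h0A : (0 : Fin (2*(n+1)) → F4) ∈ A := by
    rw [hA, Finset.mem_filter]
    exact ⟨Finset.mem_univ _, rfl, hQ0⟩
  -- Step A
  have stepA : chiSum w {x ∈ {x | x ≠ 0 ∧ Qform α (n+1) j x = 0} | x ⟨0, by omega⟩ = 0}
      = (∑ x ∈ A, chi4 (∑ i, w i * x i)) - 1 := by
    have hset : {x ∈ {x | x ≠ 0 ∧ Qform α (n+1) j x = 0} | x ⟨0, by omega⟩ = 0}
        = ↑(A.erase (0 : Fin (2*(n+1)) → F4)) := by
      ext x
      simp only [Set.mem_setOf_eq, Finset.coe_erase, Set.mem_diff, Finset.mem_coe,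
        Finset.mem_erase, hA, Finset.mem_filter, Finset.mem_univ, true_and,
        Set.mem_singleton_iff]
      tauto
    rw [chiSum, hset, finsum_mem_coe_finset, Finset.sum_erase_eq_sub h0A]
    congr 1
    simp [chi4_zero']
  -- indicator lemma
  have sum_chi4_mul' : ∀ t : F4, (∑ cc : F4, chi4 (cc * t)) = if t = 0 then (4:ℂ) else 0 := by
    intro t
    rw [← sum_chi4_mul hc hα t]
    exact Finset.sum_congr rfl (fun cc _ => by rw [mul_comm])
  -- pointwise indicator expansion
  have keyx : ∀ x : Fin (2*(n+1)) → F4,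
      (if (x ⟨0, by omega⟩ = 0 ∧ Qform α (n+1) j x = 0) then chi4 (∑ i, w i * x i) else 0)
      = (1/16) * ∑ c : F4, ∑ d : F4,
          chi4 (c * Qform α (n+1) j x + (d * x ⟨0, by omega⟩ + ∑ i, w i * x i)) := by
    intro x
    have hRHS : (∑ c : F4, ∑ d : F4,
        chi4 (c * Qform α (n+1) j x + (d * x ⟨0, by omega⟩ + ∑ i, w i * x i)))
        = (if Qform α (n+1) j x = 0 then (4:ℂ) else 0) *
          ((if x ⟨0, by omega⟩ = 0 then (4:ℂ) else 0) * chi4 (∑ i, w i * x i)) := by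
      calc (∑ c : F4, ∑ d : F4,
            chi4 (c * Qform α (n+1) j x + (d * x ⟨0, by omega⟩ + ∑ i, w i * x i)))
          = ∑ c : F4, ∑ d : F4, chi4 (c * Qform α (n+1) j x) *
              (chi4 (d * x ⟨0, by omega⟩) * chi4 (∑ i, w i * x i)) := by
            exact Finset.sum_congr rfl (fun c _ => Finset.sum_congr rfl (fun d _ => by
              rw [chi4_add hc, chi4_add hc]))
        _ = ∑ c : F4, chi4 (c * Qform α (n+1) j x) *
              ∑ d : F4, (chi4 (d * x ⟨0, by omega⟩) * chi4 (∑ i, w i * x i)) := by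
            exact Finset.sum_congr rfl (fun c _ => (Finset.mul_sum _ _ _).symm)
        _ = (∑ c : F4, chi4 (c * Qform α (n+1) j x)) *
              ∑ d : F4, (chi4 (d * x ⟨0, by omega⟩) * chi4 (∑ i, w i * x i)) := by
            rw [← Finset.sum_mul]
        _ = (∑ c : F4, chi4 (c * Qform α (n+1) j x)) *
              ((∑ d : F4, chi4 (d * x ⟨0, by omega⟩)) * chi4 (∑ i, w i * x i)) := by
            rw [← Finset.sum_mul]
        _ = _ := by rw [sum_chi4_mul', sum_chi4_mul']
    rw [hRHS]
    by_cases h1 : x ⟨0, by omega⟩ = 0 <;> by_cases h2 : Qform α (n+1) j x = 0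
    · rw [if_pos ⟨h1, h2⟩, if_pos h1, if_pos h2]; ring
    · rw [if_neg (by tauto), if_pos h1, if_neg h2]; ring
    · rw [if_neg (by tauto), if_neg h1, if_pos h2]; ring
    · rw [if_neg (by tauto), if_neg h1, if_neg h2]; ring
  -- Step B
  have stepB : (∑ x ∈ A, chi4 (∑ i, w i * x i))
      = (1/16) * ∑ c : F4, ∑ d : F4, ∑ x : Fin (2*(n+1)) → F4,
          chi4 (c * Qform α (n+1) j x + (d * x ⟨0, by omega⟩ + ∑ i, w i * x i)) := by
    rw [hA, Finset.sum_filter]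
    rw [show (∑ x : Fin (2*(n+1)) → F4,
        (if (x ⟨0, by omega⟩ = 0 ∧ Qform α (n+1) j x = 0) then chi4 (∑ i, w i * x i) else 0))
      = ∑ x : Fin (2*(n+1)) → F4, (1/16) * ∑ c : F4, ∑ d : F4,
          chi4 (c * Qform α (n+1) j x + (d * x ⟨0, by omega⟩ + ∑ i, w i * x i))
      from Finset.sum_congr rfl (fun x _ => keyx x)]
    rw [← Finset.mul_sum]
    congr 1
    rw [Finset.sum_comm]
    exact Finset.sum_congr rfl (fun c _ => Finset.sum_comm)
  -- the block summand function
  set g : F4 → F4 → Fin (n+1) → (F4 × F4) → ℂ := fun c d i p =>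
    chi4 (c * qb i p.1 p.2 +
      ((w ⟨2*i.val, by have := i.isLt; omega⟩ + if i = 0 then d else 0) * p.1 +
        w ⟨2*i.val+1, by have := i.isLt; omega⟩ * p.2)) with hg
  -- Step C : factorization
  have stepC : ∀ c d : F4, (∑ x : Fin (2*(n+1)) → F4,
      chi4 (c * Qform α (n+1) j x + (d * x ⟨0, by omega⟩ + ∑ i, w i * x i)))
      = ∏ i : Fin (n+1), ∑ p : F4 × F4, g c d i p := by
    intro c d
    rw [Fintype.prod_sum (fun (i : Fin (n+1)) (p : F4 × F4) => g c d i p)]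
    refine (Fintype.sum_bijective pairFun pairFun_bijective _ _ (fun y => rfl)).symm.trans ?_
    refine Finset.sum_congr rfl (fun y _ => ?_)
    have e0 : pairFun y ⟨0, by omega⟩ = (y 0).1 := by
      rw [show (⟨0, by omega⟩ : Fin (2*(n+1))) = ⟨2*0, by omega⟩ from rfl,
        pairFun_even y 0 (by omega)]
      rw [show (⟨0, by omega⟩ : Fin (n+1)) = 0 from Fin.ext (by simp)]
    have eexp : c * Qform α (n+1) j (pairFun y) +
        (d * pairFun y ⟨0, by omega⟩ + ∑ k, w k * pairFun y k)
        = ∑ i : Fin (n+1), (c * qb i (y i).1 (y i).2 +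
            ((w ⟨2*i.val, by have := i.isLt; omega⟩ + if i = 0 then d else 0) * (y i).1 +
              w ⟨2*i.val+1, by have := i.isLt; omega⟩ * (y i).2)) := by
      rw [hQ y, hL y, e0, Finset.mul_sum]
      have hd : d * (y 0).1 = ∑ i : Fin (n+1), (if i = 0 then d else 0) * (y i).1 := by
        rw [Finset.sum_eq_single (0 : Fin (n+1))]
        · rw [if_pos rfl]
        · intro i _ hne; rw [if_neg hne, zero_mul]
        · intro h; exact absurd (Finset.mem_univ _) h
      rw [hd, ← Finset.sum_add_distrib, ← Finset.sum_add_distrib]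
      exact Finset.sum_congr rfl (fun i _ => by ring)
    rw [eexp, chi4_sum hc]
  -- hB0 : sum over d of block 0
  have addzero_iff : ∀ u v : F4, u + v = 0 ↔ u = v := by
    intro u v
    constructor
    · intro h; linear_combination h - addself4 hc v
    · intro h; rw [h]; exact addself4 hc v
  have hB0 : ∀ c : F4, (∑ d : F4, ∑ p : F4 × F4, g c d 0 p)
      = if c = w ⟨1, by omega⟩ ^ 2 then (16:ℂ) else 0 := by
    intro c
    rw [Finset.sum_comm]
    have hpoint : ∀ p : F4 × F4, (∑ d : F4, g c d 0 p)
        = chi4 (c * qb 0 p.1 p.2 + (w ⟨0, by omega⟩ * p.1 + w ⟨1, by omega⟩ * p.2)) *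
            (if p.1 = 0 then (4:ℂ) else 0) := by
      intro p
      rw [show (∑ d : F4, g c d 0 p) = ∑ d : F4,
          chi4 (c * qb 0 p.1 p.2 + (w ⟨0, by omega⟩ * p.1 + w ⟨1, by omega⟩ * p.2)) *
            chi4 (d * p.1) from Finset.sum_congr rfl (fun d _ => by
          rw [hg]
          simp only [eq_self_iff_true, if_true, Fin.val_zero, mul_zero, zero_add]
          rw [← chi4_add hc]
          congr 1
          ring), ← Finset.mul_sum, sum_chi4_mul' p.1]
    rw [show (∑ p : F4 × F4, ∑ d : F4, g c d 0 p)
        = ∑ p : F4 × F4, chi4 (c * qb 0 p.1 p.2 +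
            (w ⟨0, by omega⟩ * p.1 + w ⟨1, by omega⟩ * p.2)) * (if p.1 = 0 then (4:ℂ) else 0)
      from Finset.sum_congr rfl (fun p _ => hpoint p)]
    rw [Fintype.sum_prod_type]
    rw [Finset.sum_eq_single (0 : F4)]
    · have hqb0 : ∀ b : F4, qb 0 0 b = b ^ 2 := by
        intro b
        rw [hqbdef]
        simp only
        rw [if_pos (lt_of_lt_of_le (by simp) hj)]
        ring
      have hval : ∀ b : F4, chi4 (c * qb 0 0 b + (w ⟨0, by omega⟩ * 0 + w ⟨1, by omega⟩ * b))
          = chi4 ((c + w ⟨1, by omega⟩ ^ 2) * b ^ 2) := by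
        intro b
        rw [hqb0 b]
        rw [show c * b ^ 2 + (w ⟨0, by omega⟩ * 0 + w ⟨1, by omega⟩ * b)
            = c * b ^ 2 + w ⟨1, by omega⟩ * b from by ring]
        rw [chi4_add hc, ← chi4_frob hc (w ⟨1, by omega⟩ * b),
          show (w ⟨1, by omega⟩ * b) ^ 2 = w ⟨1, by omega⟩ ^ 2 * b ^ 2 from by ring,
          ← chi4_add hc]
        congr 1
        ring
      rw [show (∑ b : F4, chi4 (c * qb 0 0 b + (w ⟨0, by omega⟩ * 0 + w ⟨1, by omega⟩ * b)) *
          (if (0:F4) = 0 then (4:ℂ) else 0))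
          = ∑ b : F4, chi4 ((c + w ⟨1, by omega⟩ ^ 2) * b ^ 2) * 4 from
        Finset.sum_congr rfl (fun b _ => by rw [hval b, if_pos rfl])]
      rw [← Finset.sum_mul, sum_chi4_mul_sq hc hα]
      by_cases hcw : c = w ⟨1, by omega⟩ ^ 2
      · rw [if_pos ((addzero_iff _ _).mpr hcw), if_pos hcw]; norm_num
      · rw [if_neg (fun h => hcw ((addzero_iff _ _).mp h)), if_neg hcw]; norm_num
    · intro a _ ha
      rw [show (∑ b : F4, chi4 (c * qb 0 a b + (w ⟨0, by omega⟩ * a + w ⟨1, by omega⟩ * b)) *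
          (if a = 0 then (4:ℂ) else 0)) = ∑ b : F4, (0:ℂ) from
        Finset.sum_congr rfl (fun b _ => by rw [if_neg ha, mul_zero])]
      simp
    · intro h; exact absurd (Finset.mem_univ _) h
  -- blocks i.succ are independent of d
  have hgsucc : ∀ (c d : F4) (i : Fin n) (p : F4 × F4), g c d i.succ p = g c 0 i.succ p := by
    intro c d i p
    rw [hg]
    simp only [if_neg (Fin.succ_ne_zero i)]
  -- Step D
  have stepD : (∑ c : F4, ∑ d : F4, ∏ i : Fin (n+1), ∑ p : F4 × F4, g c d i p)
      = 16 * ∏ i : Fin n, ∑ p : F4 × F4, g (w ⟨1, by omega⟩ ^ 2) 0 i.succ p := by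
    have split : ∀ c d : F4, (∏ i : Fin (n+1), ∑ p : F4 × F4, g c d i p)
        = (∑ p : F4 × F4, g c d 0 p) * ∏ i : Fin n, ∑ p : F4 × F4, g c 0 i.succ p := by
      intro c d
      rw [Fin.prod_univ_succ]
      exact congrArg (HMul.hMul _)
        (Finset.prod_congr rfl (fun i _ => Finset.sum_congr rfl (fun p _ => hgsucc c d i p)))
    calc (∑ c : F4, ∑ d : F4, ∏ i : Fin (n+1), ∑ p : F4 × F4, g c d i p)
        = ∑ c : F4, (∑ d : F4, ∑ p : F4 × F4, g c d 0 p) *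
            ∏ i : Fin n, ∑ p : F4 × F4, g c 0 i.succ p := by
          refine Finset.sum_congr rfl (fun c _ => ?_)
          rw [Finset.sum_mul]
          exact Finset.sum_congr rfl (fun d _ => split c d)
      _ = ∑ c : F4, (if c = w ⟨1, by omega⟩ ^ 2 then (16:ℂ) else 0) *
            ∏ i : Fin n, ∑ p : F4 × F4, g c 0 i.succ p := by
          exact Finset.sum_congr rfl (fun c _ => by rw [hB0 c])
      _ = 16 * ∏ i : Fin n, ∑ p : F4 × F4, g (w ⟨1, by omega⟩ ^ 2) 0 i.succ p := by
          rw [Finset.sum_eq_single (w ⟨1, by omega⟩ ^ 2)]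
          · rw [if_pos rfl]
          · intro c _ hne; rw [if_neg hne, zero_mul]
          · intro h; exact absurd (Finset.mem_univ _) h
  -- each block is ±4
  have hpm : ∀ i : Fin n, (∑ p : F4 × F4, g (w ⟨1, by omega⟩ ^ 2) 0 i.succ p) = 4 ∨
      (∑ p : F4 × F4, g (w ⟨1, by omega⟩ ^ 2) 0 i.succ p) = -4 := by
    intro i
    have hre : (∑ p : F4 × F4, g (w ⟨1, by omega⟩ ^ 2) 0 i.succ p)
        = ∑ p : F4 × F4, chi4 ((w ⟨1, by omega⟩ ^ 2) * qb i.succ p.1 p.2 +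
            w ⟨2*(i.succ).val, by have := (i.succ).isLt; omega⟩ * p.1 +
            w ⟨2*(i.succ).val+1, by have := (i.succ).isLt; omega⟩ * p.2) := by
      refine Finset.sum_congr rfl (fun p _ => ?_)
      rw [hg]
      simp only [if_neg (Fin.succ_ne_zero i)]
      congr 1
      ring
    rw [hre]
    exact blockSum hc hα _ _ _ hc₀ne (qb i.succ) (hqb i.succ)
  -- conclusion
  have hCC : (∑ c : F4, ∑ d : F4, ∑ x : Fin (2*(n+1)) → F4,
      chi4 (c * Qform α (n+1) j x + (d * x ⟨0, by omega⟩ + ∑ i, w i * x i)))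
      = ∑ c : F4, ∑ d : F4, ∏ i : Fin (n+1), ∑ p : F4 × F4, g c d i p :=
    Finset.sum_congr rfl (fun c _ => Finset.sum_congr rfl (fun d _ => stepC c d))
  rcases prod_pm4 n _ hpm with hP | hP
  · left
    rw [stepA, stepB, hCC, stepD, hP, Nat.add_sub_cancel]
    ring
  · right
    rw [stepA, stepB, hCC, stepD, hP, Nat.add_sub_cancel]
    ring
end
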